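/- Fix α ∈ (0, ∞) and define φ(x) = log Γ(x - 1 - α) - log Γ(x) + (1+α) log(x - 1 - α/2) for x > 1 + α. Then φ is convex on its domain. -/

import Mathlib

open Real Filter Finset Topology Nat

lemma term_hasDeriv (α : ℝ) (l : ℕ) {x : ℝ} (h0 : 0 < x - 1 - α + l) (h1 : 0 < x + l)
    (h2 : 0 < x - 1 - α/2 + l) (h3 : 0 < x - α/2 + l) :
    HasDerivAt (fun x : ℝ =>
      Real.log (x + l) - Real.log (x - 1 - α + l)
        + (1 + α) * (Real.log (x - 1 - α/2 + l) - Real.log (x - α/2 + l)))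
      ((x + l)⁻¹ - (x - 1 - α + l)⁻¹ + (1+α) * ((x - 1 - α/2 + l)⁻¹ - (x - α/2 + l)⁻¹)) x := by
  have d1 : HasDerivAt (fun x : ℝ => Real.log (x + l)) (x + l)⁻¹ x := by
    simpa using ((hasDerivAt_id x).add_const (l:ℝ)).log h1.ne'
  have d2 : HasDerivAt (fun x : ℝ => Real.log (x - 1 - α + l)) (x - 1 - α + l)⁻¹ x := by
    simpa using ((((hasDerivAt_id x).sub_const 1).sub_const α).add_const (l:ℝ)).log h0.ne'
  have d3 : HasDerivAt (fun x : ℝ => Real.log (x - 1 - α/2 + l)) (x - 1 - α/2 + l)⁻¹ x := by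
    simpa using ((((hasDerivAt_id x).sub_const 1).sub_const (α/2)).add_const (l:ℝ)).log h2.ne'
  have d4 : HasDerivAt (fun x : ℝ => Real.log (x - α/2 + l)) (x - α/2 + l)⁻¹ x := by
    simpa using (((hasDerivAt_id x).sub_const (α/2)).add_const (l:ℝ)).log h3.ne'
  exact (d1.sub d2).add ((d3.sub d4).const_mul (1+α))

lemma term_hasDeriv2 (α : ℝ) (l : ℕ) {x : ℝ} (h0 : 0 < x - 1 - α + l) (h1 : 0 < x + l)
    (h2 : 0 < x - 1 - α/2 + l) (h3 : 0 < x - α/2 + l) :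
    HasDerivAt (fun x : ℝ =>
      (x + l)⁻¹ - (x - 1 - α + l)⁻¹ + (1+α) * ((x - 1 - α/2 + l)⁻¹ - (x - α/2 + l)⁻¹))
      (((x - 1 - α + l)^2)⁻¹ - ((x + l)^2)⁻¹
        + (1+α) * (((x - α/2 + l)^2)⁻¹ - ((x - 1 - α/2 + l)^2)⁻¹)) x := by
  have d1 : HasDerivAt (fun x : ℝ => (x + l)⁻¹) (-1 / (x + l)^2) x := by
    simpa using ((hasDerivAt_id x).add_const (l:ℝ)).fun_inv h1.ne'
  have d2 : HasDerivAt (fun x : ℝ => (x - 1 - α + l)⁻¹) (-1 / (x - 1 - α + l)^2) x := by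
    simpa using ((((hasDerivAt_id x).sub_const 1).sub_const α).add_const (l:ℝ)).fun_inv h0.ne'
  have d3 : HasDerivAt (fun x : ℝ => (x - 1 - α/2 + l)⁻¹) (-1 / (x - 1 - α/2 + l)^2) x := by
    simpa using ((((hasDerivAt_id x).sub_const 1).sub_const (α/2)).add_const (l:ℝ)).fun_inv h2.ne'
  have d4 : HasDerivAt (fun x : ℝ => (x - α/2 + l)⁻¹) (-1 / (x - α/2 + l)^2) x := by
    simpa using (((hasDerivAt_id x).sub_const (α/2)).add_const (l:ℝ)).fun_inv h3.ne'
  have := (d1.sub d2).add ((d3.sub d4).const_mul (1+α))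
  refine this.congr_deriv ?_
  field_simp
  ring

lemma term_convex (α : ℝ) (hα : 0 < α) (l : ℕ) :
    ConvexOn ℝ (Set.Ioi (1 + α)) (fun x : ℝ =>
      Real.log (x + l) - Real.log (x - 1 - α + l)
        + (1 + α) * (Real.log (x - 1 - α/2 + l) - Real.log (x - α/2 + l))) := by
  have hl : (0:ℝ) ≤ l := Nat.cast_nonneg l
  have pos : ∀ x ∈ Set.Ioi (1+α), 0 < x - 1 - α + l ∧ 0 < x + l ∧ 0 < x - 1 - α/2 + l ∧
      0 < x - α/2 + l := by
    intro x hx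
    have hx' : 1 + α < x := hx
    refine ⟨by linarith, by linarith, by linarith, by linarith⟩
  refine convexOn_of_hasDerivWithinAt2_nonneg (convex_Ioi _)
    (f' := fun x => (x + l)⁻¹ - (x - 1 - α + l)⁻¹
      + (1+α) * ((x - 1 - α/2 + l)⁻¹ - (x - α/2 + l)⁻¹))
    (f'' := fun x => ((x - 1 - α + l)^2)⁻¹ - ((x + l)^2)⁻¹
      + (1+α) * (((x - α/2 + l)^2)⁻¹ - ((x - 1 - α/2 + l)^2)⁻¹)) ?_ ?_ ?_ ?_
  · intro x hx
    obtain ⟨h0, h1, h2, h3⟩ := pos x hx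
    exact (term_hasDeriv α l h0 h1 h2 h3).continuousAt.continuousWithinAt
  · intro x hx
    rw [interior_Ioi] at hx
    obtain ⟨h0, h1, h2, h3⟩ := pos x hx
    exact (term_hasDeriv α l h0 h1 h2 h3).hasDerivWithinAt
  · intro x hx
    rw [interior_Ioi] at hx
    obtain ⟨h0, h1, h2, h3⟩ := pos x hx
    exact (term_hasDeriv2 α l h0 h1 h2 h3).hasDerivWithinAt
  · intro x hx
    rw [interior_Ioi] at hx
    obtain ⟨h0, h1, h2, h3⟩ := pos x hx
    set a := x - 1 - α + l with ha
    have e1 : x + l = a + 1 + α := by rw [ha]; ring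
    have e2 : x - 1 - α/2 + l = a + α/2 := by rw [ha]; ring
    have e3 : x - α/2 + l = a + 1 + α/2 := by rw [ha]; ring
    rw [e1, e2, e3]
    have ha0 : 0 < a := h0
    have hp : 0 < a + 1 + α := by linarith
    have hr : 0 < a + α/2 := by linarith
    have hs : 0 < a + 1 + α/2 := by linarith
    have id1 : (a^2)⁻¹ - ((a+1+α)^2)⁻¹ = (1+α)*(2*a+1+α) / ((a*(a+1+α))^2) := by
      field_simp
      ring
    have id2 : (1+α) * (((a+1+α/2)^2)⁻¹ - ((a+α/2)^2)⁻¹)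
        = -((1+α)*(2*a+1+α) / (((a+α/2)*(a+1+α/2))^2)) := by
      field_simp
      ring
    have key : (1+α)*(2*a+1+α) / (((a+α/2)*(a+1+α/2))^2)
        ≤ (1+α)*(2*a+1+α) / ((a*(a+1+α))^2) :=
      div_le_div_of_nonneg_left (by positivity) (by positivity)
        (by have h : a*(a+1+α) ≤ (a+α/2)*(a+1+α/2) := by nlinarith
            exact pow_le_pow_left₀ (by positivity) h 2)
    linarith [id1, id2, key]

lemma log_GammaSeq_eq {s : ℝ} (hs : 0 < s) {n : ℕ} (hn : 1 ≤ n) :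
    Real.log (Real.GammaSeq s n)
      = s * Real.log n + Real.log (n ! : ℝ) - ∑ j ∈ Finset.range (n+1), Real.log (s + j) := by
  have hn0 : (0:ℝ) < n := by exact_mod_cast hn
  have hprod : ∀ j ∈ Finset.range (n+1), s + (j:ℝ) ≠ 0 := by
    intro j _
    have : (0:ℝ) ≤ j := Nat.cast_nonneg j
    positivity
  have hprodpos : (0:ℝ) < ∏ j ∈ Finset.range (n+1), (s + j) := by
    apply Finset.prod_pos
    intro j _
    have : (0:ℝ) ≤ j := Nat.cast_nonneg j
    positivity
  have hfac : (0:ℝ) < (n ! : ℝ) := by exact_mod_cast n.factorial_pos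
  rw [Real.GammaSeq, Real.log_div (by positivity) hprodpos.ne', Real.log_mul
    (by positivity) hfac.ne', Real.log_rpow hn0, Real.log_prod hprod]

lemma partial_tendsto (α : ℝ) (hα : 0 < α) {x : ℝ} (hx : 1 + α < x) :
    Filter.Tendsto (fun n : ℕ => ∑ l ∈ Finset.range (n+1),
      (Real.log (x + l) - Real.log (x - 1 - α + l)
        + (1 + α) * (Real.log (x - 1 - α/2 + l) - Real.log (x - α/2 + l)))) atTop
      (𝓝 (Real.log (Real.Gamma (x - 1 - α)) - Real.log (Real.Gamma x)
        + (1 + α) * Real.log (x - 1 - α/2))) := by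
  have hs0 : 0 < x - 1 - α := by linarith
  have hx0 : (0:ℝ) < x := by linarith
  have hc0 : (0:ℝ) < x - 1 - α/2 := by linarith
  -- the partial sum equals this expression for n ≥ 1
  have hsum : ∀ n : ℕ, 1 ≤ n → ∑ l ∈ Finset.range (n+1),
      (Real.log (x + l) - Real.log (x - 1 - α + l)
        + (1 + α) * (Real.log (x - 1 - α/2 + l) - Real.log (x - α/2 + l)))
      = (Real.log (Real.GammaSeq (x - 1 - α) n) - Real.log (Real.GammaSeq x n)
          + (1 + α) * Real.log n)
        + (1 + α) * (Real.log (x - 1 - α/2) - Real.log (x - 1 - α/2 + (n+1))) := by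
    intro n hn
    rw [Finset.sum_add_distrib, ← Finset.mul_sum]
    have tel : ∑ l ∈ Finset.range (n+1),
        (Real.log (x - 1 - α/2 + l) - Real.log (x - α/2 + l))
        = Real.log (x - 1 - α/2 + (0:ℕ)) - Real.log (x - 1 - α/2 + ((n+1 : ℕ):ℝ)) := by
      rw [← Finset.sum_range_sub' (fun l : ℕ => Real.log (x - 1 - α/2 + l)) (n+1)]
      refine Finset.sum_congr rfl fun l _ => ?_
      congr 2
      push_cast
      ring
    rw [tel, Finset.sum_sub_distrib, log_GammaSeq_eq hs0 hn, log_GammaSeq_eq hx0 hn]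
    push_cast
    ring
  -- limit of the RHS
  have T1 := (Real.GammaSeq_tendsto_Gamma (x - 1 - α)).log (Real.Gamma_pos_of_pos hs0).ne'
  have T2 := (Real.GammaSeq_tendsto_Gamma x).log (Real.Gamma_pos_of_pos hx0).ne'
  have T3 : Filter.Tendsto (fun n : ℕ =>
      Real.log (x - 1 - α/2 + ((n:ℝ)+1)) - Real.log n) atTop (𝓝 0) := by
    have h1 : Filter.Tendsto (fun n : ℕ => (x - α/2 + (n:ℝ)) / n) atTop (𝓝 1) := by
      have := (tendsto_const_div_atTop_nhds_zero_nat (x - α/2)).add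
        (tendsto_const_nhds (x := (1:ℝ)))
      rw [zero_add] at this
      refine this.congr' ?_
      filter_upwards [Filter.eventually_ge_atTop 1] with n hn
      have hn0 : (0:ℝ) < n := by exact_mod_cast hn
      field_simp
    have h2 := (h1.log one_ne_zero)
    rw [Real.log_one] at h2
    refine h2.congr' ?_
    filter_upwards [Filter.eventually_ge_atTop 1] with n hn
    have hn0 : (0:ℝ) < n := by exact_mod_cast hn
    have hpos : (0:ℝ) < x - α/2 + n := by linarith
    rw [Real.log_div hpos.ne' hn0.ne']
    congr 2
    ring
  have Tmain : Filter.Tendsto (fun n : ℕ =>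
      (Real.log (Real.GammaSeq (x - 1 - α) n) - Real.log (Real.GammaSeq x n)
          + (1 + α) * Real.log n)
        + (1 + α) * (Real.log (x - 1 - α/2) - Real.log (x - 1 - α/2 + ((n:ℝ)+1)))) atTop
      (𝓝 (Real.log (Real.Gamma (x - 1 - α)) - Real.log (Real.Gamma x)
        + (1 + α) * Real.log (x - 1 - α/2))) := by
    have hC : Filter.Tendsto (fun _ : ℕ => (1 + α) * Real.log (x - 1 - α/2)) atTop
        (𝓝 ((1 + α) * Real.log (x - 1 - α/2))) := tendsto_const_nhds
    have := ((T1.sub T2).add hC).sub (T3.const_mul (1 + α))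
    rw [mul_zero, sub_zero] at this
    exact this.congr fun n => by ring
  refine Tmain.congr' ?_
  filter_upwards [Filter.eventually_ge_atTop 1] with n hn
  rw [hsum n hn]

lemma convexOn_sum_aux {s : Set ℝ} (hs : Convex ℝ s) (t : Finset ℕ) (f : ℕ → ℝ → ℝ)
    (h : ∀ i ∈ t, ConvexOn ℝ s (f i)) : ConvexOn ℝ s (fun x => ∑ i ∈ t, f i x) := by
  classical
  induction t using Finset.induction_on with
  | empty => simpa using convexOn_const 0 hs
  | insert _ _ hne ih =>
      simp only [Finset.sum_insert hne]
      exact (h _ (Finset.mem_insert_self _ _)).add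
        (ih fun i hi => h i (Finset.mem_insert_of_mem hi))

/-- For `α > 0`, the function
`φ(x) = log Γ(x-1-α) - log Γ(x) + (1+α) log(x-1-α/2)` is convex on `(1+α, ∞)`. -/
theorem logGamma_combination_convex (α : ℝ) (hα : 0 < α) :
    ConvexOn ℝ (Set.Ioi (1 + α)) (fun x : ℝ =>
      Real.log (Real.Gamma (x - 1 - α)) - Real.log (Real.Gamma x)
        + (1 + α) * Real.log (x - 1 - α / 2)) := by
  refine ⟨convex_Ioi _, fun x hx y hy a b ha hb hab => ?_⟩
  have hz : a • x + b • y ∈ Set.Ioi (1 + α) := (convex_Ioi _) hx hy ha hb hab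
  have Sc : ∀ n : ℕ, ConvexOn ℝ (Set.Ioi (1 + α)) (fun x : ℝ => ∑ l ∈ Finset.range (n+1),
      (Real.log (x + l) - Real.log (x - 1 - α + l)
        + (1 + α) * (Real.log (x - 1 - α/2 + l) - Real.log (x - α/2 + l)))) :=
    fun n => convexOn_sum_aux (convex_Ioi _) _ _ fun l _ => term_convex α hα l
  have hx' : 1 + α < x := hx
  have hy' : 1 + α < y := hy
  have hz' : 1 + α < a • x + b • y := hz
  refine le_of_tendsto_of_tendsto' (partial_tendsto α hα hz')
    (((partial_tendsto α hα hx').const_mul a).add ((partial_tendsto α hα hy').const_mul b))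
    fun n => ?_
  have := (Sc n).2 hx hy ha hb hab
  simpa [smul_eq_mul] using this
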